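/- arXiv:2210.01566 — 2 statements merged into one kernel-verified Lean document; each statement's English description precedes it below -/
import Mathlib

section
/- (Theorem 5.12, characterization of unitary operators: equivalence of (U3) and (U6).) For a continuous K-linear operator U : H →L[K] H the following are equivalent: (a) there exists V : H →L[K] H such that ⟪x, U y⟫ = ⟪V x, y⟫ for all x, y (V is the adjoint of U), V (U x) = x and U (V x) = x for all x (V = U⁻¹), and ‖U‖ = 1; (b) U is surjective, isometric (‖U x‖ = ‖x‖ for all x), and inner-product-preserving (⟪U x, U y⟫ = ⟪x, y⟫ for all x, y), i.e. U is an automorphism of the p-adic Hilbert space H. -/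
open Filter

noncomputable section

variable (K : Type*) [NontriviallyNormedField K] [IsUltrametricDist K]
  [CompleteSpace K] [StarRing K] [NormedStarGroup K]

/-- The p-adic coordinate Hilbert space: zero-convergent sequences in `K` with sup norm. -/
abbrev H := ZeroAtInftyContinuousMap ℕ K

/-- The standard basis vectors of `H K`. -/
def e (n : ℕ) : H K where
  toFun := fun m => if m = n then 1 else 0
  continuous_toFun := continuous_of_discreteTopology
  zero_at_infty' := by
    rw [cocompact_eq_atTop (α := ℕ)]
    refine Filter.Tendsto.congr' ?_ tendsto_const_nhds
    filter_upwards [Filter.eventually_gt_atTop n] with m hm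
    simp [Nat.ne_of_gt hm]

/-- The canonical inner product on `H K`: `⟪x, y⟫ = ∑' i, star (x i) * y i`. -/
def inner' (x y : H K) : K := ∑' i, star (x i) * y i

/-- A bounded operator is of trace class if its matrix entries vanish along the
cofinite filter of `ℕ × ℕ`. -/
def IsTraceClass (T : H K →L[K] H K) : Prop :=
  Tendsto (fun q : ℕ × ℕ => (T (e K q.2)) q.1) Filter.cofinite (nhds 0)

lemma aux_norm_apply_le (x : H K) (n : ℕ) : ‖x n‖ ≤ ‖x‖ := by
  rw [← ZeroAtInftyContinuousMap.norm_toBCF_eq_norm]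
  exact BoundedContinuousFunction.norm_coe_le_norm x.toBCF n

lemma aux_norm_le (x : H K) {C : ℝ} (hC : 0 ≤ C) (h : ∀ n, ‖x n‖ ≤ C) : ‖x‖ ≤ C := by
  rw [← ZeroAtInftyContinuousMap.norm_toBCF_eq_norm]
  exact BoundedContinuousFunction.norm_le hC |>.2 h

lemma aux_norm_e (n : ℕ) : ‖e K n‖ = 1 := by
  apply le_antisymm
  · refine aux_norm_le K _ zero_le_one fun m => ?_
    show ‖if m = n then (1:K) else 0‖ ≤ 1
    split <;> simp
  · have := aux_norm_apply_le K (e K n) n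
    simpa [e] using this

lemma aux_inner_e (n : ℕ) (x : H K) : inner' K (e K n) x = x n := by
  rw [inner']
  rw [tsum_eq_single n]
  · simp [e]
  · intro m hm
    simp [e, hm]

lemma aux_abs_inner_le (x y : H K) : ‖inner' K x y‖ ≤ ‖x‖ * ‖y‖ := by
  refine IsUltrametricDist.norm_tsum_le_of_forall_le_of_nonneg
    (mul_nonneg (norm_nonneg _) (norm_nonneg _)) fun i => ?_
  calc ‖star (x i) * y i‖ ≤ ‖star (x i)‖ * ‖y i‖ := norm_mul_le _ _
    _ = ‖x i‖ * ‖y i‖ := by rw [norm_star]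
    _ ≤ ‖x‖ * ‖y‖ := by
        exact mul_le_mul (aux_norm_apply_le K x i) (aux_norm_apply_le K y i)
          (norm_nonneg _) (norm_nonneg _)

/-- Characterization of unitary operators: `U` is adjointable with `U* = U⁻¹` and
`‖U‖ = 1` iff `U` is a surjective isometric inner-product-preserving operator. -/
theorem stmt7 (U : H K →L[K] H K) :
    (∃ V : H K →L[K] H K, (∀ x y : H K, inner' K x (U y) = inner' K (V x) y) ∧
      (∀ x : H K, V (U x) = x) ∧ (∀ x : H K, U (V x) = x) ∧ ‖U‖ = 1) ↔
    (Function.Surjective U ∧ (∀ x : H K, ‖U x‖ = ‖x‖) ∧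
      ∀ x y : H K, inner' K (U x) (U y) = inner' K x y) := by
  constructor
  · rintro ⟨V, hadj, hVU, hUV, hnorm⟩
    have hpres : ∀ x y : H K, inner' K (U x) (U y) = inner' K x y := by
      intro x y
      rw [hadj (U x) y, hVU]
    refine ⟨fun y => ⟨V y, hUV y⟩, fun x => ?_, hpres⟩
    apply le_antisymm
    · calc ‖U x‖ ≤ ‖U‖ * ‖x‖ := U.le_opNorm x
        _ = ‖x‖ := by rw [hnorm, one_mul]
    · refine aux_norm_le K _ (norm_nonneg _) fun n => ?_
      have h1 : x n = inner' K (U (e K n)) (U x) := by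
        rw [hpres, aux_inner_e]
      rw [h1]
      calc ‖inner' K (U (e K n)) (U x)‖ ≤ ‖U (e K n)‖ * ‖U x‖ := aux_abs_inner_le K _ _
        _ ≤ ‖U x‖ := by
            have h2 : ‖U (e K n)‖ ≤ 1 := by
              calc ‖U (e K n)‖ ≤ ‖U‖ * ‖e K n‖ := U.le_opNorm _
                _ = 1 := by rw [hnorm, aux_norm_e, one_mul]
            calc ‖U (e K n)‖ * ‖U x‖ ≤ 1 * ‖U x‖ :=
                  mul_le_mul_of_nonneg_right h2 (norm_nonneg _)
              _ = ‖U x‖ := one_mul _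
  · rintro ⟨hsurj, hiso, hpres⟩
    have hinj : Function.Injective U := by
      intro a b hab
      have : ‖U (a - b)‖ = 0 := by rw [map_sub, hab, sub_self, norm_zero]
      rw [hiso] at this
      have := norm_eq_zero.mp this
      exact sub_eq_zero.mp this
    let eU : H K ≃ₗ[K] H K := LinearEquiv.ofBijective (U : H K →ₗ[K] H K) ⟨hinj, hsurj⟩
    have heU : ∀ x, eU x = U x := fun _ => rfl
    have hsymm : ∀ x, U (eU.symm x) = x := fun x => eU.apply_symm_apply x
    let V : H K →L[K] H K := LinearMap.mkContinuous (eU.symm : H K →ₗ[K] H K) 1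
      (fun x => by
        rw [one_mul]
        refine le_of_eq ?_
        calc ‖eU.symm x‖ = ‖U (eU.symm x)‖ := (hiso _).symm
          _ = ‖x‖ := by rw [hsymm])
    have hV : ∀ x, V x = eU.symm x := fun _ => rfl
    have hUV : ∀ x : H K, U (V x) = x := fun x => by rw [hV, hsymm]
    have hVU : ∀ x : H K, V (U x) = x := fun x => by
      rw [hV, ← heU, eU.symm_apply_apply]
    refine ⟨V, fun x y => ?_, hVU, hUV, ?_⟩
    · conv_lhs => rw [← hUV x]
      rw [hpres]
    · apply le_antisymm
      · refine U.opNorm_le_bound zero_le_one fun x => ?_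
        rw [one_mul, hiso]
      · have h0 : ‖U (e K 0)‖ = 1 := by rw [hiso, aux_norm_e]
        have := U.le_opNorm (e K 0)
        rw [h0, aux_norm_e, mul_one] at this
        exact this

end
end

section
/- (Theorem 6.9: the trace class is a left ideal in B(H) and a two-sided *-ideal in B_ad(H).) Let T : H →L[K] H be of trace class. Then: (i) for every continuous K-linear operator B : H →L[K] H, the composition B ∘ T is of trace class; (ii) if moreover B is adjointable, then T ∘ B is of trace class; (iii) if S : H →L[K] H is an adjoint of T (⟪x, T y⟫ = ⟪S x, y⟫ for all x, y), then S is of trace class. -/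
open Filter

noncomputable section

variable (K : Type*) [NontriviallyNormedField K] [IsUltrametricDist K]
  [CompleteSpace K] [StarRing K] [NormedStarGroup K]

lemma tendsto_cofinite_zero_iff {α : Type*} (g : α → K) :
    Tendsto g cofinite (nhds 0) ↔ ∀ ε > 0, {x | ε ≤ ‖g x‖}.Finite := by
  rw [Metric.tendsto_nhds]
  simp only [eventually_cofinite, dist_zero_right, not_lt]

lemma apply_norm_le (f : H K) (i : ℕ) : ‖f i‖ ≤ ‖f‖ := by
  rw [← ZeroAtInftyContinuousMap.norm_toBCF_eq_norm]
  exact f.toBCF.norm_coe_le_norm i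

lemma norm_le_of (f : H K) {C : ℝ} (hC : 0 ≤ C) (h : ∀ i, ‖f i‖ ≤ C) : ‖f‖ ≤ C := by
  rw [← ZeroAtInftyContinuousMap.norm_toBCF_eq_norm]
  exact (BoundedContinuousFunction.norm_le hC).2 h

lemma e_apply (n m : ℕ) : e K n m = if m = n then 1 else 0 := rfl

lemma norm_e_le (n : ℕ) : ‖e K n‖ ≤ 1 :=
  norm_le_of K _ zero_le_one fun i => by rw [e_apply]; split <;> simp

lemma finite_bad (y : H K) {ε : ℝ} (hε : 0 < ε) : {i | ε ≤ ‖y i‖}.Finite := by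
  have h : Tendsto y cofinite (nhds 0) := by
    rw [Nat.cofinite_eq_atTop, ← cocompact_eq_atTop (α := ℕ)]
    exact y.zero_at_infty'
  exact (tendsto_cofinite_zero_iff K y).1 h ε hε

lemma inner'_e_left (k : ℕ) (y : H K) : inner' K (e K k) y = y k := by
  unfold inner'
  rw [tsum_eq_single k]
  · simp [e_apply]
  · intro b hb
    simp [e_apply, hb]

lemma inner'_e_right (x : H K) (k : ℕ) : inner' K x (e K k) = star (x k) := by
  unfold inner'
  rw [tsum_eq_single k]
  · simp [e_apply]
  · intro b hb
    simp [e_apply, hb]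

lemma coe_sum' {ι : Type*} (s : Finset ι) (f : ι → H K) (m : ℕ) :
    (∑ k ∈ s, f k) m = ∑ k ∈ s, f k m := by
  classical
  induction s using Finset.induction with
  | empty => simp
  | @insert a s h ih =>
      rw [Finset.sum_insert h, Finset.sum_insert h, ZeroAtInftyContinuousMap.coe_add,
        Pi.add_apply, ih]

/-- The trace class is a left ideal in `B(H)` and a two-sided `*`-ideal in `B_ad(H)`. -/
theorem stmt9 (T : H K →L[K] H K) (hT : IsTraceClass K T) :
    (∀ B : H K →L[K] H K, IsTraceClass K (B ∘L T)) ∧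
    (∀ B : H K →L[K] H K,
      (∃ B' : H K →L[K] H K, ∀ x y : H K, inner' K x (B y) = inner' K (B' x) y) →
      IsTraceClass K (T ∘L B)) ∧
    (∀ S : H K →L[K] H K, (∀ x y : H K, inner' K x (T y) = inner' K (S x) y) →
      IsTraceClass K S) := by
  refine ⟨?_, ?_, ?_⟩
  · -- Left ideal: B ∘ T is of trace class.
    intro B
    rw [IsTraceClass, tendsto_cofinite_zero_iff]
    intro ε hε
    have hB1 : (0 : ℝ) < ‖B‖ + 1 := by positivity
    set δ : ℝ := ε / (‖B‖ + 1) with hδdef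
    have hδ : 0 < δ := by positivity
    have hF : {q : ℕ × ℕ | δ ≤ ‖T (e K q.2) q.1‖}.Finite :=
      (tendsto_cofinite_zero_iff K _).1 hT δ hδ
    set J : Set ℕ := Prod.snd '' {q : ℕ × ℕ | δ ≤ ‖T (e K q.2) q.1‖} with hJdef
    have hJ : J.Finite := hF.image _
    refine Set.Finite.subset
      (Set.Finite.biUnion hJ (fun j _ =>
        ((finite_bad K (B (T (e K j))) hε).prod (Set.finite_singleton j)))) ?_
    intro q hq
    have hq' : ε ≤ ‖B (T (e K q.2)) q.1‖ := by simpa using hq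
    by_cases hmem : q.2 ∈ J
    · exact Set.mem_biUnion hmem ⟨hq', rfl⟩
    · exfalso
      have hsmall : ∀ i, ‖T (e K q.2) i‖ ≤ δ := by
        intro i
        by_contra hcon
        exact hmem ⟨(i, q.2), not_le.1 hcon |>.le, rfl⟩
      have h1 : ‖T (e K q.2)‖ ≤ δ := norm_le_of K _ hδ.le hsmall
      have h2 : ‖B (T (e K q.2)) q.1‖ ≤ ‖B‖ * δ :=
        (apply_norm_le K _ _).trans ((B.le_opNorm _).trans
          (mul_le_mul_of_nonneg_left h1 (norm_nonneg B)))
      have h3 : ‖B‖ * δ < ε := by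
        rw [hδdef, mul_comm, div_mul_eq_mul_div, div_lt_iff₀ hB1]
        nlinarith [norm_nonneg B]
      exact absurd (hq'.trans h2) (not_le.2 h3)
  · -- Right ideal for adjointable B: T ∘ B is of trace class.
    rintro B ⟨B', hB'⟩
    have row : ∀ k j, (B (e K j)) k = star ((B' (e K k)) j) := by
      intro k j
      have h1 := hB' (e K k) (e K j)
      rwa [inner'_e_left, inner'_e_right] at h1
    rw [IsTraceClass, tendsto_cofinite_zero_iff]
    intro ε hε
    have hB1 : (0 : ℝ) < ‖B‖ + 1 := by positivity
    have hT1 : (0 : ℝ) < ‖T‖ + 1 := by positivity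
    set δ₁ : ℝ := ε / (2 * (‖B‖ + 1)) with hδ₁def
    set δ₂ : ℝ := ε / (2 * (‖T‖ + 1)) with hδ₂def
    have hδ₁ : 0 < δ₁ := by positivity
    have hδ₂ : 0 < δ₂ := by positivity
    have key1 : δ₁ * (‖B‖ + 1) = ε / 2 := by
      rw [hδ₁def]; field_simp
    have key2 : δ₂ * (‖T‖ + 1) = ε / 2 := by
      rw [hδ₂def]; field_simp
    have hF : {p : ℕ × ℕ | δ₁ ≤ ‖T (e K p.2) p.1‖}.Finite :=
      (tendsto_cofinite_zero_iff K _).1 hT δ₁ hδ₁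
    set F := {p : ℕ × ℕ | δ₁ ≤ ‖T (e K p.2) p.1‖} with hFdef
    set I : Set ℕ := Prod.fst '' F with hIdef
    set Ks : Set ℕ := Prod.snd '' F with hKsdef
    have hI : I.Finite := hF.image _
    have hKs : Ks.Finite := hF.image _
    set J : Set ℕ := ⋃ k ∈ Ks, {j | δ₂ ≤ ‖(B' (e K k)) j‖} with hJdef
    have hJ : J.Finite :=
      Set.Finite.biUnion hKs fun k _ => finite_bad K (B' (e K k)) hδ₂
    -- The main pointwise bound.
    have bound : ∀ i j, (i ∉ I ∨ j ∉ J) → ‖T (B (e K j)) i‖ < ε := by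
      intro i j hij
      set y : H K := B (e K j) with hydef
      have hyk : ∀ k, ‖y k‖ ≤ ‖B‖ := fun k =>
        (apply_norm_le K _ _).trans ((B.le_opNorm _).trans
          (mul_le_of_le_one_right (norm_nonneg B) (norm_e_le K j)))
      have hy0 : Tendsto y atTop (nhds 0) := by
        rw [← cocompact_eq_atTop (α := ℕ)]; exact y.zero_at_infty'
      obtain ⟨N, hN⟩ := (Metric.tendsto_atTop.1 hy0) δ₂ hδ₂
      have hN' : ∀ k, N ≤ k → ‖y k‖ < δ₂ := by
        intro k hk
        simpa [dist_zero_right] using hN k hk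
      set yN : H K := ∑ k ∈ Finset.range N, y k • e K k with hyNdef
      have hyN_apply : ∀ m, yN m = if m < N then y m else 0 := by
        intro m
        rw [hyNdef, coe_sum']
        simp [e_apply, mul_ite, Finset.sum_ite_eq, Finset.mem_range]
      have tail : ‖y - yN‖ ≤ δ₂ := by
        refine norm_le_of K _ hδ₂.le fun m => ?_
        rw [ZeroAtInftyContinuousMap.coe_sub, Pi.sub_apply, hyN_apply]
        by_cases hm : m < N
        · simp [hm, hδ₂.le]
        · rw [if_neg hm, sub_zero]
          exact (hN' m (not_lt.1 hm)).le
      have hdecomp : T y i = T yN i + T (y - yN) i := by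
        have : T y = T yN + T (y - yN) := by
          rw [← map_add]
          congr 1
          abel
        rw [this, ZeroAtInftyContinuousMap.coe_add, Pi.add_apply]
      have head_eval : T yN i = ∑ k ∈ Finset.range N, y k * T (e K k) i := by
        rw [hyNdef, map_sum, coe_sum']
        refine Finset.sum_congr rfl fun k _ => ?_
        rw [map_smul]
        simp
      have head_term : ∀ k ∈ Finset.range N, ‖y k * T (e K k) i‖ ≤ ε / 2 := by
        intro k _
        rw [norm_mul]
        by_cases hik : (i, k) ∈ F
        · -- then i ∈ I, so j ∉ J
          have hiI : i ∈ I := ⟨(i, k), hik, rfl⟩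
          have hjJ : j ∉ J := hij.resolve_left (fun h => h hiI)
          have hkKs : k ∈ Ks := ⟨(i, k), hik, rfl⟩
          have hrow : ‖y k‖ < δ₂ := by
            have : j ∉ {j | δ₂ ≤ ‖(B' (e K k)) j‖} :=
              fun h => hjJ (Set.mem_biUnion hkKs h)
            have h2 : ‖(B' (e K k)) j‖ < δ₂ := not_le.1 this
            rw [hydef]
            calc ‖B (e K j) k‖ = ‖(B' (e K k)) j‖ := by rw [row k j, norm_star]
              _ < δ₂ := h2
          have hTk : ‖T (e K k) i‖ ≤ ‖T‖ :=
            (apply_norm_le K _ _).trans ((T.le_opNorm _).trans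
              (mul_le_of_le_one_right (norm_nonneg T) (norm_e_le K k)))
          calc ‖y k‖ * ‖T (e K k) i‖ ≤ δ₂ * (‖T‖ + 1) :=
                mul_le_mul hrow.le (hTk.trans (by linarith)) (norm_nonneg _) hδ₂.le
            _ = ε / 2 := key2
        · -- small matrix entry of T
          have hTik : ‖T (e K k) i‖ < δ₁ := not_le.1 hik
          calc ‖y k‖ * ‖T (e K k) i‖ ≤ (‖B‖ + 1) * δ₁ :=
                mul_le_mul (by linarith [hyk k]) hTik.le (norm_nonneg _) (by linarith)
            _ = ε / 2 := by rw [mul_comm]; exact key1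
      have head : ‖T yN i‖ ≤ ε / 2 := by
        rw [head_eval]
        exact IsUltrametricDist.norm_sum_le_of_forall_le_of_nonneg (by positivity) head_term
      have tail2 : ‖T (y - yN) i‖ ≤ ε / 2 := by
        calc ‖T (y - yN) i‖ ≤ ‖T (y - yN)‖ := apply_norm_le K _ _
          _ ≤ ‖T‖ * ‖y - yN‖ := T.le_opNorm _
          _ ≤ (‖T‖ + 1) * δ₂ :=
              mul_le_mul (by linarith) tail (norm_nonneg _) (by linarith)
          _ = ε / 2 := by rw [mul_comm]; exact key2
      calc ‖T y i‖ = ‖T yN i + T (y - yN) i‖ := by rw [hdecomp]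
        _ ≤ max ‖T yN i‖ ‖T (y - yN) i‖ := IsUltrametricDist.norm_add_le_max _ _
        _ ≤ ε / 2 := max_le head tail2
        _ < ε := by linarith
    refine Set.Finite.subset (hI.prod hJ) ?_
    intro q hq
    have hq' : ε ≤ ‖T (B (e K q.2)) q.1‖ := by simpa using hq
    by_contra hq''
    rw [Set.mem_prod] at hq''
    exact absurd hq' (not_le.2 (bound q.1 q.2 (not_and_or.1 hq'')))
  · -- The adjoint of a trace-class operator is of trace class.
    intro S hS
    have key : ∀ i j, (S (e K i)) j = star ((T (e K j)) i) := by
      intro i j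
      have h1 := hS (e K i) (e K j)
      rw [inner'_e_left, inner'_e_right] at h1
      have h2 := congrArg star h1
      rwa [star_star, eq_comm] at h2
    rw [IsTraceClass]
    have heq : (fun q : ℕ × ℕ => S (e K q.2) q.1) =
        (star ∘ (fun q : ℕ × ℕ => T (e K q.2) q.1) ∘ Prod.swap) := by
      funext q
      exact key q.2 q.1
    rw [heq]
    have hswap : Tendsto (Prod.swap : ℕ × ℕ → ℕ × ℕ) cofinite cofinite :=
      Prod.swap_injective.tendsto_cofinite
    have hstar : Tendsto (star : K → K) (nhds 0) (nhds 0) := by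
      simpa using (continuous_star.tendsto (0 : K))
    exact hstar.comp (hT.comp hswap)
end
end
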